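/- For every c ≥ 0 there exists a unique continuous function f_c : [0,1] → ℝ with f_c(0) = 1/2 which is continuously differentiable on [0,1) and satisfies f_c'(r) = c·r/(f_c(r) − r/2) for r ∈ [0,1). Moreover f_c is nondecreasing, and for c > 0, f_c is twice continuously differentiable on (0,1] with f_c''(r) > 0 for all r ∈ (0,1]. -/

import Mathlib

open Set Filter Real Topology

noncomputable def aA (c : ℝ) : ℝ := Real.sqrt (1/16 + c) - 1/4
noncomputable def bB (c : ℝ) : ℝ := aA c + 1/2
noncomputable def LL (c v : ℝ) : ℝ := aA c * Real.log (v - bB c) + bB c * Real.log (v + aA c)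
noncomputable def RR (c v : ℝ) : ℝ := 1/2 * Real.exp (-(LL c v) / (aA c + bB c))

variable {c : ℝ}

lemma aA_pos (hc : 0 < c) : 0 < aA c := by
  have h : (1/4:ℝ) < Real.sqrt (1/16 + c) := by
    rw [show (1/4:ℝ) = Real.sqrt (1/16) by rw [show (1/16:ℝ) = (1/4)^2 by norm_num, Real.sqrt_sq (by norm_num)]]
    exact Real.sqrt_lt_sqrt (by norm_num) (by linarith)
  simpa [aA] using sub_pos.mpr h

lemma bB_gt_half (hc : 0 < c) : 1/2 < bB c := by
  have := aA_pos hc; simp only [bB]; linarith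

lemma aA_mul_bB (hc : 0 ≤ c) : aA c * bB c = c := by
  have h : Real.sqrt (1/16 + c) ^ 2 = 1/16 + c := Real.sq_sqrt (by linarith)
  simp only [aA, bB]; nlinarith [h]

lemma aA_add_bB_pos (hc : 0 < c) : 0 < aA c + bB c := by
  have := aA_pos hc; have := bB_gt_half hc; linarith

noncomputable def LLd (c v : ℝ) : ℝ := aA c / (v - bB c) + bB c / (v + aA c)
noncomputable def RRd (c v : ℝ) : ℝ := RR c v * (-(LLd c v) / (aA c + bB c))

lemma RR_pos (c v : ℝ) : 0 < RR c v := by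
  simp only [RR]; positivity

lemma v_sub_pos {v : ℝ} (hc : 0 < c) (hv : bB c < v) : 0 < v - bB c := by linarith
lemma v_add_pos {v : ℝ} (hc : 0 < c) (hv : bB c < v) : 0 < v + aA c := by
  have := aA_pos hc; have := bB_gt_half hc; linarith

lemma LLd_pos {v : ℝ} (hc : 0 < c) (hv : bB c < v) : 0 < LLd c v := by
  have := aA_pos hc; have := bB_gt_half hc
  have h1 := v_sub_pos hc hv; have h2 := v_add_pos hc hv
  have : 0 < aA c / (v - bB c) := by positivity
  have : 0 < bB c / (v + aA c) := by positivity
  simp only [LLd]; linarith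

lemma hasStrictDerivAt_LL {v : ℝ} (hc : 0 < c) (hv : bB c < v) :
    HasStrictDerivAt (LL c) (LLd c v) v := by
  have h1 := v_sub_pos hc hv; have h2 := v_add_pos hc hv
  have d1 : HasStrictDerivAt (fun v => Real.log (v - bB c)) (v - bB c)⁻¹ v := by
    have := (Real.hasStrictDerivAt_log h1.ne').comp v
      ((hasStrictDerivAt_id v).sub_const (bB c))
    simpa [Function.comp_def] using this
  have d2 : HasStrictDerivAt (fun v => Real.log (v + aA c)) (v + aA c)⁻¹ v := by
    have := (Real.hasStrictDerivAt_log h2.ne').comp v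
      ((hasStrictDerivAt_id v).add_const (aA c))
    simpa [Function.comp_def] using this
  have := (d1.const_mul (aA c)).add (d2.const_mul (bB c))
  have e : LLd c v = aA c * (v - bB c)⁻¹ + bB c * (v + aA c)⁻¹ := by simp [LLd, div_eq_mul_inv]
  rw [e]; exact this

lemma hasStrictDerivAt_RR {v : ℝ} (hc : 0 < c) (hv : bB c < v) :
    HasStrictDerivAt (RR c) (RRd c v) v := by
  have hab := aA_add_bB_pos hc
  have d1 : HasStrictDerivAt (fun v => -(LL c v) / (aA c + bB c))
      (-(LLd c v) / (aA c + bB c)) v := (hasStrictDerivAt_LL hc hv).neg.div_const _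
  have h := (d1.exp).const_mul (1/2 : ℝ)
  have : RR c = fun v => 1/2 * Real.exp (-(LL c v) / (aA c + bB c)) := rfl
  rw [this]
  rw [show RRd c v = 1 / 2 * (rexp (-LL c v / (aA c + bB c)) * (-LLd c v / (aA c + bB c))) by simp only [RRd, RR]; ring]
  exact h

lemma RRd_neg {v : ℝ} (hc : 0 < c) (hv : bB c < v) : RRd c v < 0 := by
  have h := RR_pos c v
  have h2 := LLd_pos hc hv
  have h3 := aA_add_bB_pos hc
  have : -(LLd c v) / (aA c + bB c) < 0 := div_neg_of_neg_of_pos (by linarith) h3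
  exact mul_neg_of_pos_of_neg h this

lemma strictAntiOn_RR (hc : 0 < c) : StrictAntiOn (RR c) (Ioi (bB c)) := by
  apply strictAntiOn_of_deriv_neg (convex_Ioi _)
  · intro v hv
    exact ((hasStrictDerivAt_RR hc hv).hasDerivAt.continuousAt).continuousWithinAt
  · intro v hv
    rw [interior_Ioi] at hv
    rw [(hasStrictDerivAt_RR hc hv).hasDerivAt.deriv]
    exact RRd_neg hc hv

lemma tendsto_LL_atTop (hc : 0 < c) : Tendsto (LL c) atTop atTop := by
  have h1 : Tendsto (fun v : ℝ => Real.log (v - bB c)) atTop atTop :=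
    Real.tendsto_log_atTop.comp (tendsto_atTop_add_const_right _ _ tendsto_id)
  have h2 : Tendsto (fun v : ℝ => Real.log (v + aA c)) atTop atTop :=
    Real.tendsto_log_atTop.comp (tendsto_atTop_add_const_right _ _ tendsto_id)
  exact Tendsto.atTop_add_atTop
    (h1.const_mul_atTop (aA_pos hc)) (h2.const_mul_atTop (by have := bB_gt_half hc; linarith))

lemma tendsto_RR_atTop (hc : 0 < c) : Tendsto (RR c) atTop (nhds 0) := by
  have h : Tendsto (fun v => -(LL c v) / (aA c + bB c)) atTop atBot := by
    apply Tendsto.atBot_div_const (aA_add_bB_pos hc)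
    exact tendsto_neg_atBot_iff.mpr (tendsto_LL_atTop hc)
  have := (Real.tendsto_exp_atBot).comp h
  have h2 := this.const_mul (1/2 : ℝ)
  show Tendsto (fun v => 1/2 * Real.exp (-(LL c v) / (aA c + bB c))) atTop (nhds 0)
  simpa using h2

lemma tendsto_RR_nhdsWithin (hc : 0 < c) : Tendsto (RR c) (nhdsWithin (bB c) (Ioi (bB c))) atTop := by
  have hb := bB_gt_half hc; have ha := aA_pos hc
  have h1 : Tendsto (fun v : ℝ => Real.log (v - bB c)) (nhdsWithin (bB c) (Ioi (bB c))) atBot := by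
    apply Real.tendsto_log_nhdsGT_zero.comp
    have hcont : Tendsto (fun v : ℝ => v - bB c) (nhdsWithin (bB c) (Ioi (bB c))) (nhds 0) := by
      have := Continuous.tendsto (show Continuous (fun v : ℝ => v - bB c) by continuity) (bB c)
      simpa using this.mono_left nhdsWithin_le_nhds
    rw [tendsto_nhdsWithin_iff]
    refine ⟨hcont, ?_⟩
    filter_upwards [self_mem_nhdsWithin] with v hv
    simpa using sub_pos.mpr (mem_Ioi.mp hv)
  have h2 : Tendsto (fun v : ℝ => bB c * Real.log (v + aA c))
      (nhdsWithin (bB c) (Ioi (bB c))) (nhds (bB c * Real.log (bB c + aA c))) := by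
    apply Tendsto.const_mul
    have : ContinuousAt (fun v : ℝ => Real.log (v + aA c)) (bB c) := by
      apply (Real.continuousAt_log (by linarith)).comp
      exact (continuous_id.add continuous_const).continuousAt
    exact this.continuousWithinAt
  have hL : Tendsto (LL c) (nhdsWithin (bB c) (Ioi (bB c))) atBot := by
    have h1' := h1.const_mul_atBot (aA_pos hc)
    have : Tendsto (fun v => aA c * Real.log (v - bB c) + bB c * Real.log (v + aA c))
        (nhdsWithin (bB c) (Ioi (bB c))) atBot := by
      apply tendsto_atBot_add_right_of_ge' _ (bB c * Real.log (bB c + aA c) + 1) h1'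
      filter_upwards [h2.eventually_le_const (lt_add_one _)] with v hv using hv
    exact this
  have h : Tendsto (fun v => -(LL c v) / (aA c + bB c)) (nhdsWithin (bB c) (Ioi (bB c))) atTop := by
    apply Tendsto.atTop_div_const (aA_add_bB_pos hc)
    exact tendsto_neg_atTop_iff.mpr hL
  have := (Real.tendsto_exp_atTop).comp h
  have h2' := this.const_mul_atTop (show (0:ℝ) < 1/2 by norm_num)
  show Tendsto (fun v => 1/2 * Real.exp (-(LL c v) / (aA c + bB c))) (nhdsWithin (bB c) (Ioi (bB c))) atTop
  simpa [mul_comm] using h2'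

lemma exists_V (hc : 0 < c) {r : ℝ} (hr : 0 < r) : ∃ v, bB c < v ∧ RR c v = r := by
  have h1 : ∃ v₁, bB c < v₁ ∧ r < RR c v₁ := by
    have := (tendsto_RR_nhdsWithin hc).eventually_gt_atTop r
    rcases (this.and self_mem_nhdsWithin).exists with ⟨v₁, h₁, h₂⟩
    exact ⟨v₁, h₂, h₁⟩
  obtain ⟨v₁, hv₁, hrv₁⟩ := h1
  have h2 : ∃ v₂, v₁ ≤ v₂ ∧ RR c v₂ < r := by
    have := (tendsto_RR_atTop hc).eventually_lt_const hr
    rcases (this.and (eventually_ge_atTop v₁)).exists with ⟨v₂, h₁, h₂⟩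
    exact ⟨v₂, h₂, h₁⟩
  obtain ⟨v₂, hv₁₂, hrv₂⟩ := h2
  have hcont : ContinuousOn (RR c) (Icc v₁ v₂) := by
    intro v hv
    exact ((hasStrictDerivAt_RR hc (lt_of_lt_of_le hv₁ hv.1)).hasDerivAt.continuousAt).continuousWithinAt
  have := intermediate_value_Icc' hv₁₂ hcont
  have hmem : r ∈ Icc (RR c v₂) (RR c v₁) := ⟨le_of_lt hrv₂, le_of_lt hrv₁⟩
  obtain ⟨v, hv, hveq⟩ := this hmem
  exact ⟨v, lt_of_lt_of_le hv₁ hv.1, hveq⟩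

noncomputable def VV (c r : ℝ) : ℝ :=
  if h : 0 < c ∧ 0 < r then Classical.choose (exists_V h.1 h.2) else 0

lemma VV_spec (hc : 0 < c) {r : ℝ} (hr : 0 < r) : bB c < VV c r ∧ RR c (VV c r) = r := by
  rw [VV, dif_pos ⟨hc, hr⟩]
  exact Classical.choose_spec (exists_V hc hr)

lemma VV_gt (hc : 0 < c) {r : ℝ} (hr : 0 < r) : bB c < VV c r := (VV_spec hc hr).1
lemma RR_VV (hc : 0 < c) {r : ℝ} (hr : 0 < r) : RR c (VV c r) = r := (VV_spec hc hr).2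

lemma VV_lt_iff (hc : 0 < c) {r : ℝ} (hr : 0 < r) {m : ℝ} (hm : bB c < m) :
    VV c r < m ↔ RR c m < r := by
  have h := (strictAntiOn_RR hc).lt_iff_gt hm (VV_gt hc hr)
  rw [RR_VV hc hr] at h
  exact h.symm

lemma lt_VV_iff (hc : 0 < c) {r : ℝ} (hr : 0 < r) {m : ℝ} (hm : bB c < m) :
    m < VV c r ↔ r < RR c m := by
  have h := (strictAntiOn_RR hc).lt_iff_gt (VV_gt hc hr) hm
  rw [RR_VV hc hr] at h
  exact h.symm

lemma continuousAt_VV (hc : 0 < c) {r : ℝ} (hr : 0 < r) : ContinuousAt (VV c) r := by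
  rw [ContinuousAt, tendsto_order]
  constructor
  · intro m hm
    rcases le_or_gt m (bB c) with hmb | hmb
    · filter_upwards [eventually_gt_nhds hr] with s hs
      exact lt_of_le_of_lt hmb (VV_gt hc hs)
    · have hRm : r < RR c m := by
        rw [← lt_VV_iff hc hr hmb]; exact hm
      filter_upwards [eventually_gt_nhds hr, eventually_lt_nhds hRm] with s hs hs'
      rw [lt_VV_iff hc hs hmb]; exact hs'
  · intro m hm
    have hmb : bB c < m := lt_trans (VV_gt hc hr) hm
    have hRm : RR c m < r := by rw [← VV_lt_iff hc hr hmb]; exact hm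
    filter_upwards [eventually_gt_nhds hRm] with s hs
    have hs0 : 0 < s := lt_of_le_of_lt (le_of_lt (RR_pos c m)) hs
    rw [VV_lt_iff hc hs0 hmb]; exact hs

lemma tendsto_VV_atTop (hc : 0 < c) : Tendsto (VV c) (nhdsWithin 0 (Ioi 0)) atTop := by
  rw [tendsto_atTop]
  intro M
  set M' := max M (bB c + 1) with hM'
  have hM'b : bB c < M' := lt_of_lt_of_le (lt_add_one _) (le_max_right _ _)
  have hmem : Ioo (0:ℝ) (RR c M') ∈ nhdsWithin (0:ℝ) (Ioi 0) := by
    apply Ioo_mem_nhdsGT_of_mem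
    exact ⟨le_refl _, RR_pos c M'⟩
  filter_upwards [hmem] with s hs
  have : M' < VV c s := by
    rw [lt_VV_iff hc hs.1 hM'b]; exact hs.2
  exact le_of_lt (lt_of_le_of_lt (le_max_left _ _) this)

lemma hasDerivAt_VV (hc : 0 < c) {r : ℝ} (hr : 0 < r) :
    HasDerivAt (VV c) ((RRd c (VV c r))⁻¹) r := by
  apply HasDerivAt.of_local_left_inverse (continuousAt_VV hc hr)
    ((hasStrictDerivAt_RR hc (VV_gt hc hr)).hasDerivAt) (RRd_neg hc (VV_gt hc hr)).ne
  filter_upwards [eventually_gt_nhds hr] with s hs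
  exact RR_VV hc hs

noncomputable def ff (c r : ℝ) : ℝ := if r ≤ 0 then 1/2 else r * VV c r

lemma ff_of_pos {r : ℝ} (hr : 0 < r) : ff c r = r * VV c r := by
  rw [ff, if_neg (not_le.mpr hr)]

lemma ff_zero : ff c 0 = 1/2 := by simp [ff]

lemma ff_deriv_value (hc : 0 < c) {r : ℝ} (hr : 0 < r) :
    VV c r + r * (RRd c (VV c r))⁻¹ = c / (VV c r - 1/2) := by
  set v := VV c r with hv
  have ha := aA_pos hc
  have hb := bB_gt_half hc
  have hvb := VV_gt hc hr
  have h1 := v_sub_pos hc hvb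
  have h2 := v_add_pos hc hvb
  have hab := aA_mul_bB (le_of_lt hc)
  have hbb : bB c = aA c + 1/2 := rfl
  have hLpos := LLd_pos hc hvb
  have hR : RR c v = r := RR_VV hc hr
  have hRd : RRd c v = r * (-(LLd c v) / (aA c + bB c)) := by rw [RRd, hR]
  have hsum : 0 < aA c + bB c := aA_add_bB_pos hc
  have hstep : r * (RRd c v)⁻¹ = -((aA c + bB c) / LLd c v) := by
    rw [hRd]
    field_simp
  rw [hstep]
  have hv12 : v - 1/2 > 0 := by linarith
  have hD : aA c * (v + aA c) + bB c * (v - bB c) = (aA c + bB c) * (v - 1/2) := by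
    linarith [sq_nonneg (aA c), sq_nonneg (bB c), (by nlinarith [hbb] :
      aA c * (v + aA c) + bB c * (v - bB c) - (aA c + bB c) * (v - 1/2) = 0)]
  have hL : LLd c v = (aA c * (v + aA c) + bB c * (v - bB c)) / ((v - bB c) * (v + aA c)) := by
    rw [LLd, div_add_div _ _ h1.ne' h2.ne']
    simp only [hv]; ring
  rw [eq_div_iff hv12.ne', hL, hD, div_div_eq_mul_div]
  rw [mul_div_mul_left _ _ (by linarith : aA c + bB c ≠ 0)]
  rw [← sub_eq_add_neg, sub_mul, div_mul_cancel₀ _ hv12.ne']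
  linear_combination v * hbb + hab

lemma tendsto_vRR (hc : 0 < c) : Tendsto (fun v => v * RR c v) atTop (nhds (1/2)) := by
  have ha := aA_pos hc
  have hb := bB_gt_half hc
  have hsum := aA_add_bB_pos hc
  have hg1 : Tendsto (fun v : ℝ => v / (v - bB c)) atTop (nhds 1) := by
    have h0 : Tendsto (fun v : ℝ => 1 + bB c / (v - bB c)) atTop (nhds (1 + 0)) := by
      apply tendsto_const_nhds.add
      exact Tendsto.div_atTop tendsto_const_nhds (tendsto_atTop_add_const_right _ _ tendsto_id)
    rw [add_zero] at h0
    apply h0.congr'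
    filter_upwards [eventually_gt_atTop (bB c)] with v hv
    have h' : v - bB c ≠ 0 := by linarith
    field_simp
    ring
  have hg2 : Tendsto (fun v : ℝ => v / (v + aA c)) atTop (nhds 1) := by
    have h0 : Tendsto (fun v : ℝ => 1 - aA c / (v + aA c)) atTop (nhds (1 - 0)) := by
      apply tendsto_const_nhds.sub
      exact Tendsto.div_atTop tendsto_const_nhds (tendsto_atTop_add_const_right _ _ tendsto_id)
    rw [sub_zero] at h0
    apply h0.congr'
    filter_upwards [eventually_gt_atTop (-aA c + 1)] with v hv
    have h' : v + aA c ≠ 0 := by linarith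
    field_simp
    ring
  have hlog1 : Tendsto (fun v : ℝ => Real.log (v / (v - bB c))) atTop (nhds 0) := by
    have := (Real.continuousAt_log one_ne_zero).tendsto.comp hg1
    simpa [Function.comp_def] using this
  have hlog2 : Tendsto (fun v : ℝ => Real.log (v / (v + aA c))) atTop (nhds 0) := by
    have := (Real.continuousAt_log one_ne_zero).tendsto.comp hg2
    simpa [Function.comp_def] using this
  have hsumlog : Tendsto (fun v : ℝ =>
      (aA c * Real.log (v / (v - bB c)) + bB c * Real.log (v / (v + aA c))) / (aA c + bB c))
      atTop (nhds 0) := by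
    have := ((hlog1.const_mul (aA c)).add (hlog2.const_mul (bB c))).div_const (aA c + bB c)
    simpa using this
  have hT : Tendsto (fun v : ℝ => 1/2 * Real.exp
      ((aA c * Real.log (v / (v - bB c)) + bB c * Real.log (v / (v + aA c))) / (aA c + bB c)))
      atTop (nhds (1/2)) := by
    have := (Real.continuous_exp.tendsto 0).comp hsumlog
    have h2 := this.const_mul (1/2 : ℝ)
    simpa using h2
  apply hT.congr'
  filter_upwards [eventually_gt_atTop (bB c)] with v hv
  have hv0 : 0 < v := lt_trans (by linarith) hv
  have hsub : 0 < v - bB c := by linarith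
  have hadd : 0 < v + aA c := by linarith
  rw [Real.log_div hv0.ne' hsub.ne', Real.log_div hv0.ne' hadd.ne']
  rw [RR]
  rw [show (aA c * (Real.log v - Real.log (v - bB c)) + bB c * (Real.log v - Real.log (v + aA c))) / (aA c + bB c)
      = Real.log v + -(LL c v) / (aA c + bB c) by rw [LL]; field_simp; ring]
  rw [Real.exp_add, Real.exp_log hv0]
  ring

lemma hasDerivAt_ff (hc : 0 < c) {r : ℝ} (hr : 0 < r) :
    HasDerivAt (ff c) (c / (VV c r - 1/2)) r := by
  have h1 : HasDerivAt (fun s => s * VV c s) (1 * VV c r + r * (RRd c (VV c r))⁻¹) r :=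
    (hasDerivAt_id r).mul (hasDerivAt_VV hc hr)
  rw [one_mul, ff_deriv_value hc hr] at h1
  apply h1.congr_of_eventuallyEq
  filter_upwards [eventually_gt_nhds hr] with s hs
  exact ff_of_pos hs

lemma tendsto_ff_zero (hc : 0 < c) : Tendsto (ff c) (nhdsWithin 0 (Ioi 0)) (nhds (1/2)) := by
  have h := (tendsto_vRR hc).comp (tendsto_VV_atTop hc)
  apply h.congr'
  filter_upwards [self_mem_nhdsWithin] with s hs
  have hs0 : (0:ℝ) < s := hs
  simp only [Function.comp]
  rw [RR_VV hc hs0, ff_of_pos hs0, mul_comm]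

lemma continuousOn_ff (hc : 0 < c) : ContinuousOn (ff c) (Icc 0 1) := by
  intro r hr
  rcases eq_or_lt_of_le hr.1 with h0 | h0
  · rw [← h0]
    rw [ContinuousWithinAt]
    have h05 : ff c 0 = 1/2 := ff_zero
    rw [h05]
    have heq : Icc (0:ℝ) 1 ⊆ insert 0 (Ioi 0) := by
      intro x hx
      rcases eq_or_lt_of_le hx.1 with h | h
      · exact Or.inl h.symm
      · exact Or.inr h
    apply Tendsto.mono_left _ (nhdsWithin_mono _ heq)
    rw [nhdsWithin_insert, tendsto_sup]
    refine ⟨?_, tendsto_ff_zero hc⟩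
    have := tendsto_pure_nhds (ff c) 0
    rwa [h05] at this
  · exact ((hasDerivAt_ff hc h0).continuousAt).continuousWithinAt

lemma tendsto_ffd_zero (hc : 0 < c) :
    Tendsto (fun r => c / (VV c r - 1/2)) (nhdsWithin 0 (Ioi 0)) (nhds 0) := by
  have h1 : Tendsto (fun r => VV c r - 1/2) (nhdsWithin 0 (Ioi 0)) atTop :=
    tendsto_atTop_add_const_right _ _ (tendsto_VV_atTop hc)
  exact Tendsto.div_atTop tendsto_const_nhds h1

lemma hasDerivWithinAt_ff_zero (hc : 0 < c) : HasDerivWithinAt (ff c) 0 (Icc 0 1) 0 := by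
  rw [hasDerivWithinAt_iff_tendsto_slope]
  have hsub : Icc (0:ℝ) 1 \ {0} ⊆ Ioi 0 := by
    intro x hx
    rcases eq_or_lt_of_le hx.1.1 with h | h
    · exact absurd h.symm hx.2
    · exact h
  apply Tendsto.mono_left _ (nhdsWithin_mono _ hsub)
  -- slope (ff c) 0 r = (ff c r - 1/2) / r
  have key : ∀ r, 0 < r → r ≤ 1 → 0 ≤ slope (ff c) 0 r ∧ slope (ff c) 0 r ≤ c / (VV c r - 1/2) := by
    intro r hr0 hr1
    have hcont : ContinuousOn (ff c) (Icc 0 r) :=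
      (continuousOn_ff hc).mono (Icc_subset_Icc le_rfl hr1)
    have hderiv : ∀ x ∈ Ioo (0:ℝ) r, HasDerivAt (ff c) (c / (VV c x - 1/2)) x :=
      fun x hx => hasDerivAt_ff hc hx.1
    obtain ⟨ξ, hξ, hξeq⟩ := exists_hasDerivAt_eq_slope (ff c) _ hr0 hcont hderiv
    have hslope : slope (ff c) 0 r = c / (VV c ξ - 1/2) := by
      rw [slope_def_field, ← hξeq]
    have hVξ : bB c < VV c ξ := VV_gt hc hξ.1
    have hVr : bB c < VV c r := VV_gt hc hr0
    have hb := bB_gt_half hc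
    have hpos : 0 < VV c ξ - 1/2 := by linarith
    have hposr : 0 < VV c r - 1/2 := by linarith
    constructor
    · rw [hslope]; positivity
    · rw [hslope]
      have hVrξ : VV c r ≤ VV c ξ := by
        have : VV c r < VV c ξ := by
          rw [VV_lt_iff hc hr0 hVξ, RR_VV hc hξ.1]
          exact hξ.2
        linarith
      gcongr
  apply tendsto_of_tendsto_of_tendsto_of_le_of_le' tendsto_const_nhds (tendsto_ffd_zero hc)
  · filter_upwards [Ioo_mem_nhdsGT_of_mem (show (0:ℝ) ∈ Ico (0:ℝ) 1 from ⟨le_refl _, one_pos⟩)]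
      with r hr
    exact (key r hr.1 hr.2.le).1
  · filter_upwards [Ioo_mem_nhdsGT_of_mem (show (0:ℝ) ∈ Ico (0:ℝ) 1 from ⟨le_refl _, one_pos⟩)]
      with r hr
    exact (key r hr.1 hr.2.le).2

lemma ff_gt_bB (hc : 0 < c) {r : ℝ} (hr : 0 ≤ r) : bB c * r < ff c r := by
  rcases eq_or_lt_of_le hr with h | h
  · rw [← h, ff_zero]; norm_num
  · rw [ff_of_pos h, mul_comm]
    exact (mul_lt_mul_iff_right₀ h).mpr (VV_gt hc h)

lemma ff_sub_half_pos (hc : 0 < c) {r : ℝ} (hr : 0 ≤ r) : 0 < ff c r - r/2 := by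
  have h := ff_gt_bB hc hr
  have hb := bB_gt_half hc
  nlinarith

lemma ffd_eq (hc : 0 < c) {r : ℝ} (hr : 0 < r) :
    c / (VV c r - 1/2) = c * r / (ff c r - r/2) := by
  rw [ff_of_pos hr]
  rw [show r * VV c r - r/2 = r * (VV c r - 1/2) by ring]
  rw [mul_comm c r, mul_div_mul_left _ _ hr.ne']

lemma ff_ode (hc : 0 < c) {r : ℝ} (hr : r ∈ Ico (0:ℝ) 1) :
    HasDerivWithinAt (ff c) (c * r / (ff c r - r/2)) (Icc 0 1) r := by
  rcases eq_or_lt_of_le hr.1 with h0 | h0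
  · rw [← h0]
    have := hasDerivWithinAt_ff_zero hc
    convert this using 1
    simp
  · rw [← ffd_eq hc h0]
    exact (hasDerivAt_ff hc h0).hasDerivWithinAt

lemma ff_identity (hc : 0 < c) {r : ℝ} (hr : 0 ≤ r) :
    aA c * Real.log (ff c r - bB c * r) + bB c * Real.log (ff c r + aA c * r)
      = (aA c + bB c) * Real.log (1/2) := by
  rcases eq_or_lt_of_le hr with h | h
  · rw [← h]; rw [ff_zero]; push_cast; ring_nf
  · have hv := VV_gt hc h
    have ha := aA_pos hc
    have hb := bB_gt_half hc
    have h1 : 0 < VV c r - bB c := by linarith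
    have h2 : 0 < VV c r + aA c := by linarith
    have hsum := aA_add_bB_pos hc
    have hlogr : Real.log r = Real.log (1/2) + -(LL c (VV c r)) / (aA c + bB c) := by
      have hR : RR c (VV c r) = r := RR_VV hc h
      have : Real.log (RR c (VV c r)) = Real.log r := by rw [hR]
      rw [RR] at this
      rw [← this, Real.log_mul (by norm_num) (Real.exp_ne_zero _), Real.log_exp]
    rw [ff_of_pos h]
    rw [show r * VV c r - bB c * r = r * (VV c r - bB c) by ring,
        show r * VV c r + aA c * r = r * (VV c r + aA c) by ring]
    rw [Real.log_mul h.ne' h1.ne', Real.log_mul h.ne' h2.ne']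
    have hLL : LL c (VV c r) = aA c * Real.log (VV c r - bB c) + bB c * Real.log (VV c r + aA c) := rfl
    have hLLval : LL c (VV c r) = (aA c + bB c) * (Real.log (1/2) - Real.log r) := by
      have h' := hlogr
      field_simp at h'
      linarith [h']
    linear_combination hLLval - hLL

lemma monotoneOn_ff (hc : 0 < c) : MonotoneOn (ff c) (Icc 0 1) := by
  apply monotoneOn_of_deriv_nonneg (convex_Icc 0 1) (continuousOn_ff hc)
  · intro x hx
    rw [interior_Icc] at hx
    exact ((hasDerivAt_ff hc hx.1).differentiableAt).differentiableWithinAt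
  · intro x hx
    rw [interior_Icc] at hx
    rw [(hasDerivAt_ff hc hx.1).deriv]
    have hv := VV_gt hc hx.1
    have hb := bB_gt_half hc
    have hpos : 0 < VV c x - 1/2 := by linarith
    positivity

noncomputable def ff2 (c r : ℝ) : ℝ := -c * (RRd c (VV c r))⁻¹ / (VV c r - 1/2)^2

lemma ff2_pos (hc : 0 < c) {r : ℝ} (hr : 0 < r) : 0 < ff2 c r := by
  have hv := VV_gt hc hr
  have hb := bB_gt_half hc
  have hRd := RRd_neg hc hv
  have h1 : 0 < -(RRd c (VV c r))⁻¹ := by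
    rw [neg_pos]
    exact inv_neg''.mpr hRd
  have h2 : 0 < VV c r - 1/2 := by linarith
  rw [ff2]
  have : -c * (RRd c (VV c r))⁻¹ = c * -(RRd c (VV c r))⁻¹ := by ring
  rw [this]
  positivity

lemma hasDerivAt_ffd (hc : 0 < c) {r : ℝ} (hr : 0 < r) :
    HasDerivAt (fun s => c / (VV c s - 1/2)) (ff2 c r) r := by
  have hv := VV_gt hc hr
  have hb := bB_gt_half hc
  have hne : VV c r - 1/2 ≠ 0 := by intro h; nlinarith [h]
  have hder : HasDerivAt (fun s => VV c s - 1/2) ((RRd c (VV c r))⁻¹) r :=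
    (hasDerivAt_VV hc hr).sub_const _
  have := (hasDerivAt_const r c).div hder hne
  rw [show ff2 c r = (0 * (VV c r - 1 / 2) - c * (RRd c (VV c r))⁻¹) / (VV c r - 1 / 2) ^ 2 by rw [ff2]; ring]
  exact this

lemma continuousAt_ff2 (hc : 0 < c) {r : ℝ} (hr : 0 < r) : ContinuousAt (ff2 c) r := by
  have hv := VV_gt hc hr
  have ha := aA_pos hc
  have hb := bB_gt_half hc
  have hVc : ContinuousAt (VV c) r := continuousAt_VV hc hr
  have hRRc : ContinuousAt (RR c) (VV c r) := (hasStrictDerivAt_RR hc hv).hasDerivAt.continuousAt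
  have hLLdc : ContinuousAt (LLd c) (VV c r) := by
    have h1 : (0:ℝ) < VV c r - bB c := by linarith
    have h2 : (0:ℝ) < VV c r + aA c := by linarith
    apply ContinuousAt.add
    · exact (continuousAt_const.div ((continuous_id.sub continuous_const).continuousAt) h1.ne')
    · exact (continuousAt_const.div ((continuous_id.add continuous_const).continuousAt) h2.ne')
  have hRRdc : ContinuousAt (RRd c) (VV c r) := by
    apply hRRc.mul
    exact (hLLdc.neg.div_const _)
  have hcomp : ContinuousAt (fun s => RRd c (VV c s)) r := hRRdc.comp hVc
  have hne : RRd c (VV c r) ≠ 0 := (RRd_neg hc hv).ne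
  have hVne : VV c r - 1/2 ≠ 0 := by intro h; nlinarith [h]
  apply ContinuousAt.div
  · exact continuousAt_const.mul (hcomp.inv₀ hne)
  · exact ((hVc.sub continuousAt_const).pow 2)
  · positivity

lemma deriv_to_Ici {g : ℝ → ℝ} {d s : ℝ} (hs : 0 ≤ s) (hs1 : s < 1)
    (h : HasDerivWithinAt g d (Icc 0 1) s) : HasDerivWithinAt g d (Ici s) s := by
  apply h.mono_of_mem_nhdsWithin
  exact mem_nhdsWithin.mpr ⟨Iio 1, isOpen_Iio, hs1,
    fun x hx => ⟨le_trans hs hx.2, le_of_lt hx.1⟩⟩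

lemma H_strictMono (hc : 0 < c) {s : ℝ} (hs : 0 ≤ s) :
    StrictMonoOn (fun y => aA c * Real.log (y - bB c * s) + bB c * Real.log (y + aA c * s))
      (Ioi (bB c * s)) := by
  have ha := aA_pos hc
  have hb := bB_gt_half hc
  intro y1 h1 y2 h2 h12
  simp only [mem_Ioi] at h1 h2
  have hbs : 0 ≤ bB c * s := by positivity
  have hy1X : 0 < y1 - bB c * s := by linarith
  have hy2X : 0 < y2 - bB c * s := by linarith
  have hy1Y : 0 < y1 + aA c * s := by nlinarith
  have hy2Y : 0 < y2 + aA c * s := by nlinarith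
  apply add_lt_add
  · exact (mul_lt_mul_iff_right₀ ha).mpr (Real.log_lt_log hy1X (by linarith))
  · exact (mul_lt_mul_iff_right₀ (by linarith : (0:ℝ) < bB c)).mpr
      (Real.log_lt_log hy1Y (by linarith))

lemma helper_eq (hc : 0 < c) {g : ℝ → ℝ} (hgc : ContinuousOn g (Icc 0 1)) (hg0 : g 0 = 1/2)
    (hgd : ∀ r ∈ Ico (0:ℝ) 1, HasDerivWithinAt g (c * r / (g r - r/2)) (Icc 0 1) r)
    {t : ℝ} (ht0 : 0 ≤ t) (ht1 : t < 1)
    (hgb : ∀ s ∈ Icc 0 t, bB c * s < g s) :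
    ∀ s ∈ Icc 0 t, g s = ff c s := by
  have ha := aA_pos hc
  have hb := bB_gt_half hc
  have hbb : bB c = aA c + 1/2 := rfl
  have hab := aA_mul_bB (le_of_lt hc)
  set Hg := fun s => aA c * Real.log (g s - bB c * s) + bB c * Real.log (g s + aA c * s) with hHg
  have hX : ∀ s ∈ Icc 0 t, 0 < g s - bB c * s := fun s hs => sub_pos.mpr (hgb s hs)
  have hY : ∀ s ∈ Icc 0 t, 0 < g s + aA c * s := by
    intro s hs
    have h1 := hgb s hs
    have h2 : 0 ≤ (aA c + bB c) * s := by
      have := hs.1; positivity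
    nlinarith
  have hS2 : ∀ s ∈ Icc 0 t, 0 < g s - s/2 := by
    intro s hs
    have h1 := hgb s hs
    have h2 : 0 ≤ (bB c - 1/2) * s := by
      have := hs.1
      have : 0 ≤ bB c - 1/2 := by linarith
      positivity
    nlinarith [hs.1]
  have hgct : ContinuousOn g (Icc 0 t) := hgc.mono (Icc_subset_Icc le_rfl ht1.le)
  have hcont : ContinuousOn Hg (Icc 0 t) := by
    apply ContinuousOn.add
    · exact (ContinuousOn.log (hgct.sub (continuousOn_const.mul continuousOn_id))
        (fun s hs => (hX s hs).ne')).const_smul (aA c)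
    · exact (ContinuousOn.log (hgct.add (continuousOn_const.mul continuousOn_id))
        (fun s hs => (hY s hs).ne')).const_smul (bB c)
  have hderiv : ∀ s ∈ Ico 0 t, HasDerivWithinAt Hg 0 (Ici s) s := by
    intro s hs
    have hst : s ∈ Icc 0 t := ⟨hs.1, hs.2.le⟩
    have hs1 : s < 1 := lt_trans hs.2 ht1
    have hD := deriv_to_Ici hs.1 hs1 (hgd s ⟨hs.1, hs1⟩)
    set d := c * s / (g s - s/2) with hd
    have hXs := hX s hst
    have hYs := hY s hst
    have hS2s := hS2 s hst
    have hid : HasDerivWithinAt (fun y : ℝ => y) 1 (Ici s) s := hasDerivWithinAt_id s _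
    have h1 : HasDerivWithinAt (fun y => g y - bB c * y) (d - bB c * 1) (Ici s) s :=
      hD.sub (hid.const_mul (bB c))
    have h2 : HasDerivWithinAt (fun y => g y + aA c * y) (d + aA c * 1) (Ici s) s :=
      hD.add (hid.const_mul (aA c))
    have hlog1 := (h1.log hXs.ne').const_mul (aA c)
    have hlog2 := (h2.log hYs.ne').const_mul (bB c)
    have htot := hlog1.add hlog2
    have hval : aA c * ((d - bB c * 1) / (g s - bB c * s)) +
        bB c * ((d + aA c * 1) / (g s + aA c * s)) = 0 := by
      have hd' : d * (g s - s/2) = c * s := by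
        rw [hd, div_mul_cancel₀ _ hS2s.ne']
      have hnum : aA c * ((d - bB c * 1) * (g s + aA c * s)) +
          bB c * ((d + aA c * 1) * (g s - bB c * s)) = 0 := by
        linear_combination (aA c + bB c) * hd' - d * s * (aA c + bB c) * hbb -
          s * (aA c + bB c) * hab
      have hsplit : aA c * ((d - bB c * 1) / (g s - bB c * s)) +
          bB c * ((d + aA c * 1) / (g s + aA c * s)) =
          (aA c * ((d - bB c * 1) * (g s + aA c * s)) +
            bB c * ((d + aA c * 1) * (g s - bB c * s))) /
            ((g s - bB c * s) * (g s + aA c * s)) := by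
        field_simp
      rw [hsplit, hnum, zero_div]
    rw [hval] at htot
    exact htot
  have hconst := constant_of_has_deriv_right_zero hcont hderiv
  have hHg0 : Hg 0 = aA c * Real.log (1/2) + bB c * Real.log (1/2) := by
    simp [hHg, hg0]
  intro s hs
  have hgs := hconst s hs
  rw [hHg0] at hgs
  have hffid := ff_identity hc hs.1
  have hffb := ff_gt_bB hc hs.1
  have hgb' := hgb s hs
  apply (H_strictMono hc hs.1).injOn (mem_Ioi.mpr hgb') (mem_Ioi.mpr hffb)
  simp only []
  rw [hffid]
  show Hg s = (aA c + bB c) * Real.log (1/2)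
  rw [hgs]
  ring

lemma unique_sol (hc : 0 < c) {g : ℝ → ℝ} (hgc : ContinuousOn g (Icc 0 1)) (hg0 : g 0 = 1/2)
    (hgd : ∀ r ∈ Ico (0:ℝ) 1, HasDerivWithinAt g (c * r / (g r - r/2)) (Icc 0 1) r) :
    EqOn (ff c) g (Icc 0 1) := by
  set S := {t : ℝ | t ∈ Icc 0 1 ∧ ∀ s ∈ Icc 0 t, g s = ff c s} with hS
  have h0S : (0:ℝ) ∈ S := by
    refine ⟨⟨le_refl _, zero_le_one⟩, fun s hs => ?_⟩
    have : s = 0 := le_antisymm hs.2 hs.1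
    rw [this, hg0, ff_zero]
  have hbdd : BddAbove S := ⟨1, fun t ht => ht.1.2⟩
  have hne : S.Nonempty := ⟨0, h0S⟩
  set u := sSup S with hu
  have hu0 : 0 ≤ u := le_csSup hbdd h0S
  have hu1 : u ≤ 1 := csSup_le hne (fun t ht => ht.1.2)
  have hlt : ∀ s, 0 ≤ s → s < u → g s = ff c s := by
    intro s hs0 hsu
    obtain ⟨t, htS, hst⟩ := exists_lt_of_lt_csSup hne hsu
    exact htS.2 s ⟨hs0, hst.le⟩
  have huu : g u = ff c u := by
    rcases eq_or_lt_of_le hu0 with h | h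
    · rw [← h, hg0, ff_zero]
    · have hfil : (𝓝[Ico 0 u] u).NeBot := by
        rw [nhdsWithin_Ico_eq_nhdsLT h]
        infer_instance
      have hsub : Ico 0 u ⊆ Icc 0 1 := fun x hx => ⟨hx.1, le_trans hx.2.le hu1⟩
      have hg_t : Tendsto g (𝓝[Ico 0 u] u) (𝓝 (g u)) :=
        (hgc u ⟨hu0, hu1⟩).mono_left (nhdsWithin_mono _ hsub)
      have hf_t : Tendsto (ff c) (𝓝[Ico 0 u] u) (𝓝 (ff c u)) :=
        ((continuousOn_ff hc) u ⟨hu0, hu1⟩).mono_left (nhdsWithin_mono _ hsub)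
      have heq : g =ᶠ[𝓝[Ico 0 u] u] ff c := by
        filter_upwards [self_mem_nhdsWithin] with s hs
        exact hlt s hs.1 hs.2
      exact tendsto_nhds_unique (hg_t.congr' heq) hf_t
  have huS : u ∈ S := by
    refine ⟨⟨hu0, hu1⟩, fun s hs => ?_⟩
    rcases eq_or_lt_of_le hs.2 with h | h
    · rw [h, huu]
    · exact hlt s hs.1 h
  rcases eq_or_lt_of_le hu1 with hu1' | hu1'
  · intro x hx
    exact (huS.2 x ⟨hx.1, hu1' ▸ hx.2⟩).symm
  · exfalso
    -- extend beyond u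
    have hgbu : 0 < g u - bB c * u := by
      rw [huu]
      exact sub_pos.mpr (ff_gt_bB hc hu0)
    have htend : Tendsto (fun s => g s - bB c * s) (𝓝[Icc u 1] u) (𝓝 (g u - bB c * u)) := by
      have h1 : Tendsto g (𝓝[Icc u 1] u) (𝓝 (g u)) :=
        (hgc u ⟨hu0, hu1⟩).mono_left (nhdsWithin_mono _ (Icc_subset_Icc hu0 le_rfl))
      have h2 : Tendsto (fun s : ℝ => bB c * s) (𝓝[Icc u 1] u) (𝓝 (bB c * u)) :=
        ((continuous_const.mul continuous_id).tendsto u).mono_left nhdsWithin_le_nhds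
      exact h1.sub h2
    have hev1 : ∀ᶠ s in 𝓝[Icc u 1] u, 0 < g s - bB c * s :=
      htend.eventually_const_lt hgbu
    have hev2 : ∀ᶠ s in 𝓝[Icc u 1] u, s < 1 := by
      apply eventually_nhdsWithin_of_eventually_nhds
      exact eventually_lt_nhds hu1'
    have hev := hev1.and hev2
    rw [nhdsWithin_Icc_eq_nhdsGE hu1'] at hev
    obtain ⟨t, htu, htsub⟩ := mem_nhdsGE_iff_exists_Icc_subset.mp hev
    have htu' : u < t := htu
    have htP := htsub (right_mem_Icc.mpr htu'.le)
    have ht1 : t < 1 := htP.2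
    have ht0 : 0 ≤ t := le_trans hu0 htu'.le
    have hgb : ∀ s ∈ Icc 0 t, bB c * s < g s := by
      intro s hs
      rcases le_or_gt s u with hsu | hsu
      · have := huS.2 s ⟨hs.1, hsu⟩
        rw [this]
        exact ff_gt_bB hc hs.1
      · have : s ∈ Icc u t := ⟨hsu.le, hs.2⟩
        exact sub_pos.mp (htsub this).1
    have hall := helper_eq hc hgc hg0 hgd ht0 ht1 hgb
    have htS : t ∈ S := ⟨⟨ht0, ht1.le⟩, hall⟩
    exact absurd (le_csSup hbdd htS) (not_le.mpr htu')

lemma ffd_ode (hc : 0 < c) {r : ℝ} (hr : 0 < r) :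
    HasDerivAt (fun s => c * s / (ff c s - s/2)) (ff2 c r) r := by
  have h := hasDerivAt_ffd hc hr
  apply h.congr_of_eventuallyEq
  filter_upwards [eventually_gt_nhds hr] with s hs
  exact (ffd_eq hc hs).symm

theorem stmt12 (c : ℝ) (hc : 0 ≤ c) :
    ∃ f : ℝ → ℝ,
      (ContinuousOn f (Set.Icc 0 1) ∧ f 0 = 1/2 ∧
        ∀ r ∈ Set.Ico (0:ℝ) 1,
          HasDerivWithinAt f (c * r / (f r - r/2)) (Set.Icc 0 1) r) ∧
      (∀ g : ℝ → ℝ,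
        (ContinuousOn g (Set.Icc 0 1) ∧ g 0 = 1/2 ∧
          ∀ r ∈ Set.Ico (0:ℝ) 1,
            HasDerivWithinAt g (c * r / (g r - r/2)) (Set.Icc 0 1) r) →
        Set.EqOn f g (Set.Icc 0 1)) ∧
      MonotoneOn f (Set.Icc 0 1) ∧
      (0 < c → ∃ f'' : ℝ → ℝ,
        ContinuousOn f'' (Set.Ioc 0 1) ∧
        (∀ r ∈ Set.Ioc (0:ℝ) 1,
          HasDerivWithinAt (fun s => c * s / (f s - s/2)) (f'' r) (Set.Ioc 0 1) r) ∧
        ∀ r ∈ Set.Ioc (0:ℝ) 1, 0 < f'' r) := by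
  rcases eq_or_lt_of_le hc with h0 | h0
  · refine ⟨fun _ => 1/2, ⟨continuousOn_const, rfl, ?_⟩, ?_, monotoneOn_const, ?_⟩
    · intro r hr
      have hval : c * r / ((1:ℝ)/2 - r/2) = 0 := by rw [← h0]; simp
      rw [hval]
      exact hasDerivWithinAt_const _ _ _
    · rintro g ⟨hgc, hg0, hgd⟩
      have hconst : ∀ x ∈ Icc (0:ℝ) 1, g x = g 0 := by
        apply constant_of_has_deriv_right_zero hgc
        intro x hx
        have hd := hgd x hx
        rw [← h0] at hd
        simp only [zero_mul, zero_div] at hd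
        exact deriv_to_Ici hx.1 hx.2 hd
      intro x hx
      rw [hconst x hx, hg0]
    · intro hpos
      rw [← h0] at hpos
      exact absurd hpos (lt_irrefl 0)
  · refine ⟨ff c, ⟨continuousOn_ff h0, ff_zero, fun r hr => ff_ode h0 hr⟩, ?_,
      monotoneOn_ff h0, ?_⟩
    · rintro g ⟨hgc, hg0, hgd⟩
      exact unique_sol h0 hgc hg0 hgd
    · intro _
      exact ⟨ff2 c, fun r hr => (continuousAt_ff2 h0 hr.1).continuousWithinAt,
        fun r hr => (ffd_ode h0 hr.1).hasDerivWithinAt,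
        fun r hr => ff2_pos h0 hr.1⟩
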